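/- Fix coprime positive integers k, l with 1 ≤ l < k. For any positive integer m, let Q(m) denote the least prime p with p ≡ l (mod k) and gcd(p, m) = 1. For every integer r ≥ 1, there exists a positive integer C such that for all integers m ≥ C, Q(m)^r < m. -/

import Mathlib

set_option maxHeartbeats 1600000

open Finset Real

namespace St16

lemma theta_le (N : ℕ) :
    ∑ p ∈ (Finset.range N).filter Nat.Prime, Real.log p ≤ N * Real.log 4 := by
  cases N with
  | zero => simp
  | succ M =>
    have h1 : ∑ p ∈ (Finset.range (M+1)).filter Nat.Prime, Real.log p
        = Real.log (primorial M) := by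
      rw [primorial, Nat.cast_prod,
        Real.log_prod (fun p hp => by
          have := (Finset.mem_filter.mp hp).2.pos
          positivity)]
    rw [h1]
    have h2 : (primorial M : ℝ) ≤ (4:ℝ) ^ M := by
      exact_mod_cast primorial_le_4_pow M
    have h4 : (0:ℝ) ≤ Real.log 4 := Real.log_nonneg (by norm_num)
    calc Real.log (primorial M) ≤ Real.log ((4:ℝ)^M) := by
          apply Real.log_le_log (by exact_mod_cast primorial_pos M) h2
      _ = M * Real.log 4 := by rw [Real.log_pow]
      _ ≤ (M+1 : ℕ) * Real.log 4 := by push_cast; nlinarith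

lemma sum_range_filter_split (f : ℕ → ℝ) (P : ℕ → Prop) [DecidablePred P] {y Y : ℕ} (h : y ≤ Y) :
    ∑ p ∈ (Finset.range Y).filter P, f p
      = ∑ p ∈ (Finset.range y).filter P, f p + ∑ p ∈ (Finset.Ico y Y).filter P, f p := by
  rw [Finset.range_eq_Ico,
    ← Finset.Ico_union_Ico_eq_Ico (Nat.zero_le y) h, Finset.filter_union,
    Finset.sum_union (Finset.disjoint_filter_filter (Finset.Ico_disjoint_Ico_consecutive 0 y Y)),
    ← Finset.range_eq_Ico]

/-- dyadic head bound -/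

lemma head_le (J : ℕ) :
    ∑ p ∈ (Finset.range (2^J)).filter Nat.Prime, Real.log p / p ≤ J * (2 * Real.log 4) := by
  induction J with
  | zero =>
    norm_num
    rw [show Finset.filter Nat.Prime {0} = ∅ by decide]
    simp
  | succ J ih =>
    have hsplit := sum_range_filter_split (fun p => Real.log p / p) Nat.Prime
      (Nat.pow_le_pow_right (by norm_num) (Nat.le_succ J) : 2^J ≤ 2^(J+1))
    rw [hsplit]
    have hIco : ∑ p ∈ (Finset.Ico (2^J) (2^(J+1))).filter Nat.Prime, Real.log p / p
        ≤ 2 * Real.log 4 := by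
      have h1 : ∀ p ∈ (Finset.Ico (2^J) (2^(J+1))).filter Nat.Prime,
          Real.log p / p ≤ Real.log p / (2^J : ℝ) := by
        intro p hp
        obtain ⟨hmem, hprime⟩ := Finset.mem_filter.mp hp
        have h2 : (2^J : ℝ) ≤ p := by exact_mod_cast (Finset.mem_Ico.mp hmem).1
        have hlogp : 0 ≤ Real.log p := Real.log_natCast_nonneg p
        gcongr
      have h3 : ∑ p ∈ (Finset.Ico (2^J) (2^(J+1))).filter Nat.Prime, Real.log p
          ≤ (2^(J+1) : ℕ) * Real.log 4 := by
        refine le_trans (Finset.sum_le_sum_of_subset_of_nonneg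
          (Finset.filter_subset_filter _ (fun x hx => Finset.mem_range.mpr
            (Finset.mem_Ico.mp hx).2))
          (fun i _ _ => Real.log_natCast_nonneg i)) (theta_le (2^(J+1)))
      calc ∑ p ∈ (Finset.Ico (2^J) (2^(J+1))).filter Nat.Prime, Real.log p / p
          ≤ ∑ p ∈ (Finset.Ico (2^J) (2^(J+1))).filter Nat.Prime, Real.log p / (2^J : ℝ) :=
            Finset.sum_le_sum h1
        _ = (∑ p ∈ (Finset.Ico (2^J) (2^(J+1))).filter Nat.Prime, Real.log p) / (2^J : ℝ) := by
            rw [Finset.sum_div]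
        _ ≤ ((2^(J+1) : ℕ) * Real.log 4) / (2^J : ℝ) := by gcongr
        _ = 2 * Real.log 4 := by
            rw [pow_succ]; push_cast; field_simp
    push_cast
    nlinarith [ih, hIco]

lemma tele {e a : ℝ} (he : 0 < e) (he1 : e ≤ 1) (ha : 2 ≤ a) :
    e * a ^ (-1 - e) ≤ (a - 1) ^ (-e) - a ^ (-e) := by
  have ha0 : (0:ℝ) < a := by linarith
  have ha1 : (0:ℝ) < a - 1 := by linarith
  have hs : -1 ≤ -(1/a) := by
    rw [neg_le_neg_iff, div_le_one ha0]; linarith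
  have hbern : (1 - 1/a) ^ e ≤ 1 - e * (1/a) := by
    have := rpow_one_add_le_one_add_mul_self (s := -(1/a)) hs he.le he1
    calc (1 - 1/a) ^ e = (1 + -(1/a)) ^ e := by ring_nf
      _ ≤ 1 + e * -(1/a) := this
      _ = 1 - e * (1/a) := by ring
  have h1a : 0 < 1 - 1/a := by
    rw [sub_pos, div_lt_one ha0]; linarith
  have hea : 0 < 1 - e * (1/a) := by
    have : e * (1/a) ≤ 1 * (1/2) := by
      apply mul_le_mul he1 _ (by positivity) (by norm_num)
      rw [div_le_div_iff₀ ha0 (by norm_num : (0:ℝ) < 2)]; linarith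
    linarith
  have hkey : 1 + e * (1/a) ≤ (1 - 1/a) ^ (-e) := by
    rw [rpow_neg h1a.le, le_inv_comm₀ (by positivity) (by positivity)]
    calc (1 - 1/a) ^ e ≤ 1 - e * (1/a) := hbern
      _ ≤ (1 + e * (1/a))⁻¹ := by
          rw [inv_eq_one_div, le_div_iff₀ (by positivity)]
          nlinarith [sq_nonneg (e * (1/a))]
  have hsplit : (a - 1) ^ (-e) = a ^ (-e) * (1 - 1/a) ^ (-e) := by
    rw [← Real.mul_rpow ha0.le h1a.le]
    congr 1
    field_simp
  have hae : (0:ℝ) < a ^ (-e) := rpow_pos_of_pos ha0 _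
  have hpow : a ^ (-1 - e) = a ^ (-e) * (1/a) := by
    rw [show (-1 - e) = -e + (-1) by ring, Real.rpow_add ha0, Real.rpow_neg_one, inv_eq_one_div]
  calc e * a ^ (-1 - e) = a ^ (-e) * (e * (1/a)) := by rw [hpow]; ring
    _ ≤ a ^ (-e) * ((1 - 1/a) ^ (-e) - 1) := by
        apply mul_le_mul_of_nonneg_left _ hae.le
        linarith
    _ = a ^ (-e) * (1 - 1/a) ^ (-e) - a ^ (-e) := by ring
    _ = (a - 1) ^ (-e) - a ^ (-e) := by rw [hsplit]

lemma tail_bound {e : ℝ} (he : 0 < e) (he1 : e ≤ 1) {Y : ℕ} (hY : 2 ≤ Y)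
    (f : ℕ → ℝ) (h0 : ∀ n, 0 ≤ f n) (hle : ∀ n, Y ≤ n → f n ≤ e⁻¹ * (n:ℝ) ^ (-1 - e)) :
    ∑' n, f (n + Y) ≤ e⁻¹ * e⁻¹ * ((Y:ℝ) - 1) ^ (-e) := by
  set g : ℕ → ℝ := fun n => ((n : ℝ) + (Y:ℝ) - 1) ^ (-e) with hg
  apply tsum_le_of_sum_range_le (fun n => h0 _)
  intro N
  have hterm : ∀ n : ℕ, f (n + Y) ≤ e⁻¹ * e⁻¹ * (g n - g (n + 1)) := by
    intro n
    have ha : (2:ℝ) ≤ ((n + Y : ℕ) : ℝ) := by exact_mod_cast le_trans hY (Nat.le_add_left Y n)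
    have ht := tele he he1 ha
    have hf := hle (n + Y) (Nat.le_add_left Y n)
    have hginv : g n = (((n + Y : ℕ) : ℝ) - 1) ^ (-e) ∧ g (n+1) = ((n + Y : ℕ) : ℝ) ^ (-e) := by
      constructor <;> · simp only [hg]; push_cast; ring_nf
    calc f (n + Y) ≤ e⁻¹ * ((n + Y : ℕ) : ℝ) ^ (-1 - e) := hf
      _ = e⁻¹ * e⁻¹ * (e * ((n + Y : ℕ) : ℝ) ^ (-1 - e)) := by
          field_simp
      _ ≤ e⁻¹ * e⁻¹ * ((((n + Y : ℕ) : ℝ) - 1) ^ (-e) - ((n + Y : ℕ) : ℝ) ^ (-e)) := by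
          apply mul_le_mul_of_nonneg_left ht (by positivity)
      _ = e⁻¹ * e⁻¹ * (g n - g (n + 1)) := by rw [hginv.1, hginv.2]
  calc ∑ n ∈ Finset.range N, f (n + Y)
      ≤ ∑ n ∈ Finset.range N, e⁻¹ * e⁻¹ * (g n - g (n + 1)) := Finset.sum_le_sum fun n _ => hterm n
    _ = e⁻¹ * e⁻¹ * (g 0 - g N) := by rw [← Finset.mul_sum, Finset.sum_range_sub' g N]
    _ ≤ e⁻¹ * e⁻¹ * g 0 := by
        have : 0 ≤ g N := by 
          apply Real.rpow_nonneg
          have : (1:ℝ) ≤ (Y:ℝ) := by exact_mod_cast le_trans one_le_two hY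
          push_cast; linarith
        nlinarith [this, inv_nonneg.mpr he.le]
    _ = e⁻¹ * e⁻¹ * ((Y:ℝ) - 1) ^ (-e) := by simp [hg]

noncomputable def Mf (k l Y : ℕ) : ℝ :=
  ∑ p ∈ (Finset.range Y).filter Nat.Prime, (if p % k = l then Real.log p / p else 0)

/-- Chebyshev-type partial sum over primes `≡ l (mod k)` below `Y`. -/

noncomputable def Wf (k l Y : ℕ) : ℝ :=
  ∑ p ∈ (Finset.range Y).filter Nat.Prime, (if p % k = l then Real.log p else 0)

lemma pow16 (J : ℕ) : 4 * J^2 ≤ 16^J := by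
  induction J with
  | zero => norm_num
  | succ J ih =>
    rcases Nat.eq_zero_or_pos J with rfl | hJ
    · norm_num
    · have h1 : (J+1)^2 ≤ 4 * J^2 := by nlinarith
      calc 4 * (J+1)^2 ≤ 4 * (4 * J^2) := by omega
        _ ≤ 4 * 16^J := by omega
        _ ≤ 16^(J+1) := by rw [pow_succ]; omega

lemma mertens_lower (k l : ℕ) (hl : 1 ≤ l) (hlk : l < k) (hcop : Nat.gcd k l = 1) :
    ∃ C₂ : ℝ, 0 ≤ C₂ ∧ ∀ J : ℕ, 1 ≤ J → ∀ Y : ℕ, 2^(8*J^2) + 1 ≤ Y →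
      ((k.totient : ℝ))⁻¹ * J - C₂ ≤ Mf k l Y := by
  haveI : NeZero k := ⟨by omega⟩
  set a : ZMod k := (l : ZMod k) with ha_def
  have ha : IsUnit a := by
    rw [ha_def, ZMod.isUnit_iff_coprime]
    exact Nat.coprime_comm.mp hcop
  obtain ⟨C, hC⟩ := ArithmeticFunction.vonMangoldt.LSeries_residueClass_lower_bound ha
  set rc : ℕ → ℝ := ArithmeticFunction.vonMangoldt.residueClass a with hrc
  set C₀ : ℝ := ∑' n : ℕ, (if n.Prime then 0 else rc n) / n with hC₀
  have hrc_nonneg : ∀ n, 0 ≤ rc n := ArithmeticFunction.vonMangoldt.residueClass_nonneg a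
  have hrc_log : ∀ n, rc n ≤ Real.log n := fun n =>
    (ArithmeticFunction.vonMangoldt.residueClass_le a n).trans
      ArithmeticFunction.vonMangoldt_le_log
  have hsum_np : Summable fun n : ℕ => (if n.Prime then 0 else rc n) / n :=
    ArithmeticFunction.vonMangoldt.summable_residueClass_non_primes_div a
  have hC₀_nonneg : 0 ≤ C₀ := tsum_nonneg fun n => by
    have := hrc_nonneg n; positivity
  refine ⟨max C 0 + C₀ + 1, by positivity, ?_⟩
  intro J hJ Y hY
  -- set up x and e
  set e : ℝ := (2 * (J:ℝ))⁻¹ with he_def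
  have hJ0 : (0:ℝ) < J := by exact_mod_cast hJ
  have hJ1 : (1:ℝ) ≤ J := by exact_mod_cast hJ
  have he : 0 < e := by positivity
  have he1 : e ≤ 1 := by
    rw [he_def, inv_le_one_iff₀]; right; linarith
  set x : ℝ := 1 + 2 * e with hx_def
  have hx1 : 1 < x := by simp only [hx_def]; linarith
  have hx2 : x ≤ 2 := by
    have : 2 * e ≤ 1 := by
      rw [he_def]
      rw [mul_inv_le_iff₀ (by linarith)]
      linarith
    simp only [hx_def]; linarith
  have hx_sub : x - 1 = (J:ℝ)⁻¹ := by
    simp only [hx_def, he_def]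
    field_simp
    ring
  -- the function
  set f : ℕ → ℝ := fun n => rc n / (n:ℝ) ^ x with hf_def
  have hf_nonneg : ∀ n, 0 ≤ f n := fun n => by
    have h1 := hrc_nonneg n
    have h2 : (0:ℝ) ≤ (n:ℝ) ^ x := Real.rpow_nonneg n.cast_nonneg x
    positivity
  have hf_le : ∀ n : ℕ, 1 ≤ n → f n ≤ e⁻¹ * (n:ℝ) ^ (-1 - e) := by
    intro n hn
    have hn0 : (0:ℝ) < n := by exact_mod_cast hn
    have hlog : Real.log n ≤ (n:ℝ) ^ e / e := Real.log_le_rpow_div n.cast_nonneg he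
    have hxp : (0:ℝ) < (n:ℝ) ^ x := Real.rpow_pos_of_pos hn0 x
    calc f n ≤ ((n:ℝ) ^ e / e) / (n:ℝ) ^ x := by
          show rc n / (n:ℝ) ^ x ≤ _
          have h9 := (hrc_log n).trans hlog
          gcongr
      _ = e⁻¹ * ((n:ℝ) ^ e / (n:ℝ) ^ x) := by ring
      _ = e⁻¹ * (n:ℝ) ^ (e - x) := by rw [← Real.rpow_sub hn0]
      _ = e⁻¹ * (n:ℝ) ^ (-1 - e) := by
          congr 1
          · congr 1
            simp only [hx_def]; ring
  have hf0 : ∀ n : ℕ, f n ≤ e⁻¹ * (n:ℝ) ^ (-1 - e) := by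
    intro n
    rcases Nat.eq_zero_or_pos n with rfl | hn
    · simp only [hf_def, Nat.cast_zero]
      rw [Real.zero_rpow (by linarith : x ≠ 0), Real.zero_rpow (by nlinarith : -1-e ≠ 0)]
      simp [ArithmeticFunction.vonMangoldt.residueClass_apply_zero]
    · exact hf_le n hn
  have hsumf : Summable f := by
    apply Summable.of_nonneg_of_le hf_nonneg hf0
    exact (Real.summable_nat_rpow.mpr (by linarith)).mul_left e⁻¹
  -- lower bound on full sum
  have hfull : (k.totient : ℝ)⁻¹ * J - C ≤ ∑' n, f n := by
    have := hC (Set.mem_Ioc.mpr ⟨hx1, hx2⟩)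
    rw [hx_sub] at this
    have heq : (k.totient : ℝ)⁻¹ / (J:ℝ)⁻¹ = (k.totient : ℝ)⁻¹ * J := by
      field_simp
    rw [heq] at this
    exact this
  -- split
  have hsplit : ∑ n ∈ Finset.range Y, f n + ∑' n, f (n + Y) = ∑' n, f n :=
    Summable.sum_add_tsum_nat_add Y hsumf
  -- tail bound
  have hY2 : 2 ≤ Y := by
    have h9 : 1 ≤ 2^(8*J^2) := Nat.one_le_two_pow
    omega
  have htail : ∑' n, f (n + Y) ≤ 1 := by
    have h1 := tail_bound he he1 hY2 f hf_nonneg (fun n hn => hf0 n)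
    have hYlarge : (2:ℝ) ^ ((8 * J^2 : ℕ) : ℝ) ≤ (Y:ℝ) - 1 := by
      rw [Real.rpow_natCast]
      have : ((2:ℕ) ^ (8*J^2) : ℝ) ≤ (Y:ℝ) - 1 := by
        have : (2:ℕ)^(8*J^2) + 1 ≤ Y := hY
        have := (Nat.cast_le (α := ℝ)).mpr this
        push_cast at this ⊢
        linarith
      exact_mod_cast this
    have hexp : ((8 * J^2 : ℕ) : ℝ) * e = 4 * J := by
      push_cast
      rw [he_def]
      field_simp
      ring
    have h2 : ((Y:ℝ) - 1) ^ (-e) ≤ ((2:ℝ) ^ (4 * (J:ℝ)))⁻¹ := by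
      rw [Real.rpow_neg (by nlinarith [hYlarge, Real.rpow_nonneg (by norm_num : (0:ℝ) ≤ 2) ((8 * J^2 : ℕ) : ℝ)] : (0:ℝ) ≤ (Y:ℝ) - 1)]
      apply inv_anti₀ (by positivity)
      calc (2:ℝ) ^ (4 * (J:ℝ)) = (2:ℝ) ^ (((8 * J^2 : ℕ) : ℝ) * e) := by rw [hexp]
        _ = ((2:ℝ) ^ ((8 * J^2 : ℕ) : ℝ)) ^ e := Real.rpow_mul (by norm_num) _ _
        _ ≤ ((Y:ℝ) - 1) ^ e := Real.rpow_le_rpow (by positivity) hYlarge he.le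
    have hinv : e⁻¹ = 2 * (J:ℝ) := by rw [he_def, inv_inv]
    have h16 : (4 * J^2 : ℝ) ≤ (2:ℝ) ^ (4 * (J:ℝ)) := by
      have h161 : ((4 * J^2 : ℕ) : ℝ) ≤ ((16 ^ J : ℕ) : ℝ) := by exact_mod_cast pow16 J
      have h163 : (2:ℝ) ^ (4:ℝ) = 16 := by
        rw [show (4:ℝ) = ((4:ℕ):ℝ) by norm_num, Real.rpow_natCast]; norm_num
      have h162 : (2:ℝ) ^ (4 * (J:ℝ)) = ((16:ℝ)) ^ (J:ℝ) := by
        rw [← h163, ← Real.rpow_mul (by norm_num)]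
      rw [h162, show ((16:ℝ)) ^ (J:ℝ) = ((16:ℝ)) ^ (J:ℕ) by rw [Real.rpow_natCast]]
      push_cast at h161 ⊢
      exact h161
    have hpos4J : (0:ℝ) < (2:ℝ) ^ (4 * (J:ℝ)) := Real.rpow_pos_of_pos (by norm_num) _
    calc ∑' n, f (n + Y) ≤ e⁻¹ * e⁻¹ * ((Y:ℝ) - 1) ^ (-e) := h1
      _ ≤ (2 * (J:ℝ)) * (2 * (J:ℝ)) * ((2:ℝ) ^ (4 * (J:ℝ)))⁻¹ := by
          rw [hinv]
          apply mul_le_mul_of_nonneg_left h2 (by positivity)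
      _ = (4 * J^2 : ℝ) * ((2:ℝ) ^ (4 * (J:ℝ)))⁻¹ := by ring
      _ ≤ ((2:ℝ) ^ (4 * (J:ℝ))) * ((2:ℝ) ^ (4 * (J:ℝ)))⁻¹ := by
          apply mul_le_mul_of_nonneg_right h16 (by positivity)
      _ = 1 := mul_inv_cancel₀ hpos4J.ne'
  -- term comparison: p^x ≥ p
  have hdiv : ∀ p : ℕ, 1 ≤ p → Real.log p / (p:ℝ) ^ x ≤ Real.log p / p := by
    intro p hp
    have hp0 : (0:ℝ) < p := by exact_mod_cast hp
    have hp1 : (1:ℝ) ≤ p := by exact_mod_cast hp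
    have hpx : (p:ℝ) ≤ (p:ℝ) ^ x := by
      calc (p:ℝ) = (p:ℝ) ^ (1:ℝ) := (Real.rpow_one _).symm
        _ ≤ (p:ℝ) ^ x := Real.rpow_le_rpow_of_exponent_le hp1 hx1.le
    exact div_le_div_of_nonneg_left (Real.log_natCast_nonneg p) hp0 hpx
  -- prime part sum is at most Mf
  have hprime_le : ∑ p ∈ (Finset.range Y).filter Nat.Prime, f p ≤ Mf k l Y := by
    apply Finset.sum_le_sum
    intro p hp
    have hprime : p.Prime := (Finset.mem_filter.mp hp).2
    have hrcp : rc p = if p % k = l then Real.log p else 0 := by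
      rw [hrc, ArithmeticFunction.vonMangoldt.residueClass, Set.indicator_apply]
      simp only [Set.mem_setOf_eq]
      have hmem : (p : ZMod k) = a ↔ p % k = l := by
        rw [ha_def, ZMod.natCast_eq_natCast_iff', Nat.mod_eq_of_lt hlk]
      by_cases hm : p % k = l
      · rw [if_pos (hmem.mpr hm), if_pos hm, ArithmeticFunction.vonMangoldt_apply_prime hprime]
      · rw [if_neg (fun hc => hm (hmem.mp hc)), if_neg hm]
    show rc p / (p:ℝ) ^ x ≤ _
    rw [hrcp]
    by_cases hm : p % k = l
    · rw [if_pos hm, if_pos hm]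
      exact hdiv p hprime.one_lt.le
    · rw [if_neg hm, if_neg hm, zero_div]
  -- non-prime part at most C₀
  have hnp_le : ∑ n ∈ (Finset.range Y).filter (fun n => ¬ n.Prime), f n ≤ C₀ := by
    have hstep : ∑ n ∈ (Finset.range Y).filter (fun n => ¬ n.Prime), f n
        ≤ ∑ n ∈ (Finset.range Y).filter (fun n => ¬ n.Prime), (if n.Prime then 0 else rc n) / n := by
      apply Finset.sum_le_sum
      intro n hn
      have hnp : ¬ n.Prime := (Finset.mem_filter.mp hn).2
      rw [if_neg hnp]
      rcases Nat.eq_zero_or_pos n with rfl | hn1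
      · simp only [hf_def, Nat.cast_zero, Real.zero_rpow (by linarith : x ≠ 0)]
        simp
      · have hn0 : (0:ℝ) < n := by exact_mod_cast hn1
        have hn1' : (1:ℝ) ≤ n := by exact_mod_cast hn1
        have hpx : (n:ℝ) ≤ (n:ℝ) ^ x := by
          calc (n:ℝ) = (n:ℝ) ^ (1:ℝ) := (Real.rpow_one _).symm
            _ ≤ (n:ℝ) ^ x := Real.rpow_le_rpow_of_exponent_le hn1' hx1.le
        exact div_le_div_of_nonneg_left (hrc_nonneg n) hn0 hpx
    refine hstep.trans ?_
    rw [hC₀]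
    apply Summable.sum_le_tsum
    · intro n _
      have h1 := hrc_nonneg n
      have : (0:ℝ) ≤ (if n.Prime then 0 else rc n) := by split <;> simp [h1]
      positivity
    · exact hsum_np
  -- combine
  have hfin : ∑ n ∈ Finset.range Y, f n ≤ Mf k l Y + C₀ := by
    rw [← Finset.sum_filter_add_sum_filter_not (Finset.range Y) Nat.Prime f]
    exact add_le_add hprime_le hnp_le
  have := hfull
  rw [← hsplit] at this
  have hCle : C ≤ max C 0 := le_max_left C 0
  linarith

lemma exp_quad {t : ℝ} (ht : 0 ≤ t) : t^2/4 ≤ Real.exp t := by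
  have h1 : 1 + t/2 ≤ Real.exp (t/2) := by
    have := Real.add_one_le_exp (t/2); linarith
  have h2 : (t/2)^2 ≤ (1 + t/2)^2 := by nlinarith
  have h3 : (1 + t/2)^2 ≤ (Real.exp (t/2))^2 := by
    apply pow_le_pow_left₀ (by linarith) h1
  have h4 : (Real.exp (t/2))^2 = Real.exp t := by
    rw [sq, ← Real.exp_add]
    ring_nf
  nlinarith

/-- KEY: the Chebyshev sum over primes ≡ l mod k below Y eventually beats R (log Y + 1). -/

lemma key (k l : ℕ) (hl : 1 ≤ l) (hlk : l < k) (hcop : Nat.gcd k l = 1) (R : ℝ) :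
    ∃ Y₀ : ℕ, 2 ≤ Y₀ ∧ ∀ Y : ℕ, Y₀ ≤ Y → R * (Real.log Y + 1) ≤ Wf k l Y := by
  obtain ⟨C₂, hC₂0, hml⟩ := mertens_lower k l hl hlk hcop
  set S : ℝ := max R 1 with hS_def
  have hS1 : (1:ℝ) ≤ S := le_max_right R 1
  have hSR : R ≤ S := le_max_left R 1
  set c : ℝ := ((k.totient : ℝ))⁻¹ with hc_def
  have htot : 0 < k.totient := Nat.totient_pos.mpr (by omega)
  have hc : 0 < c := by
    rw [hc_def]; positivity
  have hc1 : c ≤ 1 := by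
    rw [hc_def, inv_le_one_iff₀]; right; exact_mod_cast htot
  set L : ℝ := 2 * Real.log 4 with hL_def
  have hlog2 : (0:ℝ) < Real.log 2 := Real.log_pos one_lt_two
  have hlog2u : Real.log 2 ≤ 1 := by
    have := Real.log_le_sub_one_of_pos (by norm_num : (0:ℝ) < 2); linarith
  have hL4 : L = 4 * Real.log 2 := by
    rw [hL_def, show (4:ℝ) = 2^2 by norm_num, Real.log_pow]; push_cast; ring
  have hLpos : 0 < L := by rw [hL4]; positivity
  set J₀ : ℕ := 2 + ⌈4*(C₂+L)/c⌉₊ + ⌈33792 * S / c^3⌉₊ with hJ₀_def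
  refine ⟨2^(8*(J₀+1)^2) + 1, by have : 1 ≤ 2^(8*(J₀+1)^2) := Nat.one_le_two_pow; omega, ?_⟩
  intro Y hY
  have hY2 : 2 ≤ Y := le_trans (by have : 1 ≤ 2^(8*(J₀+1)^2) := Nat.one_le_two_pow; omega) hY
  -- define J
  set J : ℕ := Nat.sqrt (Nat.log 2 (Y-1) / 8) with hJ_def
  -- (iii) J is large
  have hJlarge : J₀ + 1 ≤ J := by
    have h1 : 8*(J₀+1)^2 ≤ Nat.log 2 (Y-1) := by
      calc 8*(J₀+1)^2 = Nat.log 2 (2^(8*(J₀+1)^2)) := (Nat.log_pow one_lt_two _).symm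
        _ ≤ Nat.log 2 (Y-1) := Nat.log_mono_right (by omega)
    rw [hJ_def, Nat.le_sqrt]
    have h2 : (J₀+1)*(J₀+1) = (J₀+1)^2 := by ring
    rw [h2, Nat.le_div_iff_mul_le (by norm_num)]
    omega
  have hJ1 : 1 ≤ J := by omega
  have hJR1 : (1:ℝ) ≤ (J:ℝ) := by exact_mod_cast hJ1
  -- (i) 2^(8 J^2) + 1 ≤ Y
  have hYJ : 2^(8*J^2) + 1 ≤ Y := by
    have h1 : J^2 ≤ Nat.log 2 (Y-1)/8 := by
      rw [hJ_def]; exact Nat.sqrt_le' _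
    have h2 : 8*J^2 ≤ Nat.log 2 (Y-1) := by omega
    have h3 : 2^(8*J^2) ≤ 2^(Nat.log 2 (Y-1)) := Nat.pow_le_pow_right (by norm_num) h2
    have h4 : 2^(Nat.log 2 (Y-1)) ≤ Y - 1 := Nat.pow_log_le_self 2 (by omega)
    omega
  -- (ii) upper bound on log Y
  have hlogY : Real.log Y ≤ 8*((J:ℝ)+1)^2 := by
    have h1 : Nat.log 2 (Y-1) < 8*(J+1)^2 := by
      have h2 : Nat.log 2 (Y-1)/8 < (J+1)^2 := by
        rw [hJ_def]; exact Nat.lt_succ_sqrt' _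
      omega
    have h2 : Y - 1 < 2^(Nat.log 2 (Y-1) + 1) := Nat.lt_pow_succ_log_self one_lt_two _
    have h3 : Y ≤ 2^(8*(J+1)^2) := by
      have : Nat.log 2 (Y-1) + 1 ≤ 8*(J+1)^2 := h1
      have h4 : 2^(Nat.log 2 (Y-1)+1) ≤ 2^(8*(J+1)^2) := Nat.pow_le_pow_right (by norm_num) this
      omega
    calc Real.log Y ≤ Real.log ((2:ℝ)^(8*(J+1)^2 : ℕ)) := by
          apply Real.log_le_log (by positivity)
          exact_mod_cast h3
      _ = (8*(J+1)^2 : ℕ) * Real.log 2 := Real.log_pow _ _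
      _ ≤ (8*(J+1)^2 : ℕ) * 1 := by
          apply mul_le_mul_of_nonneg_left hlog2u (by positivity)
      _ = 8*((J:ℝ)+1)^2 := by push_cast; ring
  -- define J' and y
  set J' : ℕ := ⌈c * J / (2*L)⌉₊ with hJ'_def
  have hJ'lb : c * J / (2*L) ≤ (J' : ℝ) := Nat.le_ceil _
  have hJ'ub : (J' : ℝ) < c * J / (2*L) + 1 := Nat.ceil_lt_add_one (by positivity)
  have hJ'J : J' ≤ J := by
    have h1 : c * J / (2*L) + 1 ≤ (J:ℝ) := by
      have hlog2l : (0.6931471803:ℝ) < Real.log 2 := by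
        have := Real.log_two_gt_d9; linarith
      have : c * J / (2*L) ≤ J/4 := by
        rw [div_le_div_iff₀ (by positivity) (by norm_num)]
        nlinarith [hJR1, hc, hc1, hLpos, hL4]
      have hJ2 : (2:ℝ) ≤ J := by exact_mod_cast (by omega : 2 ≤ J)
      nlinarith
    have := hJ'ub.trans_le h1
    exact_mod_cast this.le
  set y : ℕ := 2^J' with hy_def
  have hyY : y ≤ Y := by
    have h1 : (2:ℕ)^J' ≤ 2^J := Nat.pow_le_pow_right (by norm_num) hJ'J
    have h2 : (2:ℕ)^J ≤ 2^(8*J^2) := Nat.pow_le_pow_right (by norm_num) (by nlinarith)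
    exact le_trans h1 (le_trans h2 (le_trans (Nat.le_succ _) hYJ))
  -- y is big : y ≥ c^2 J^2/256
  have hybig : c^2 * J^2 / 256 ≤ (y:ℝ) := by
    have h1 : (y:ℝ) = Real.exp ((J':ℝ) * Real.log 2) := by
      rw [hy_def]
      push_cast
      rw [← Real.rpow_natCast 2 J', Real.rpow_def_of_pos (by norm_num)]
      ring_nf
    have h2 : c * J / 8 ≤ (J':ℝ) * Real.log 2 := by
      have h8 : c * J / (2*L) = c * J / 8 / Real.log 2 := by
        rw [hL4]; field_simp; ring
      rw [h8, div_le_iff₀ hlog2] at hJ'lb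
      linarith
    have h5 := exp_quad (t := (J':ℝ) * Real.log 2) (by positivity)
    have h6 : (c*J/8)^2 ≤ ((J':ℝ) * Real.log 2)^2 := by
      apply pow_le_pow_left₀ (by positivity) h2
    rw [h1]
    calc c^2 * J^2/256 = (c*J/8)^2/4 := by ring
      _ ≤ ((J':ℝ) * Real.log 2)^2/4 := by linarith
      _ ≤ Real.exp ((J':ℝ) * Real.log 2) := h5
  -- Mertens bounds
  have hMY : c * J - C₂ ≤ Mf k l Y := hml J hJ1 Y hYJ
  have hMy : Mf k l y ≤ c * J / 2 + L := by
    have h1 : Mf k l y ≤ (J':ℝ) * (2 * Real.log 4) := by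
      refine le_trans ?_ (head_le J')
      apply Finset.sum_le_sum
      intro p hp
      have hprime : p.Prime := (Finset.mem_filter.mp hp).2
      have hlogp : 0 ≤ Real.log p := Real.log_natCast_nonneg p
      have hppos : (0:ℝ) < p := by exact_mod_cast hprime.pos
      split
      · exact le_refl _
      · positivity
    have h2 : (J':ℝ) * (2*Real.log 4) = L * J' := by rw [hL_def]; ring
    calc Mf k l y ≤ L * J' := h1.trans_eq h2
      _ ≤ L * (c * J / (2*L) + 1) := by
          apply mul_le_mul_of_nonneg_left hJ'ub.le hLpos.le
      _ = c * J / 2 + L := by field_simp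
  -- split Wf and Mf
  have hWsplit := sum_range_filter_split (fun p => if p % k = l then Real.log p else 0) Nat.Prime hyY
  have hMsplit := sum_range_filter_split (fun p => if p % k = l then Real.log p / p else 0) Nat.Prime hyY
  -- Ico bound : W_Ico ≥ y * M_Ico
  have hIco : (y:ℝ) * (∑ p ∈ (Finset.Ico y Y).filter Nat.Prime, (if p % k = l then Real.log p / p else 0))
      ≤ ∑ p ∈ (Finset.Ico y Y).filter Nat.Prime, (if p % k = l then Real.log p else 0) := by
    rw [Finset.mul_sum]
    apply Finset.sum_le_sum
    intro p hp
    obtain ⟨hmem, hprime⟩ := Finset.mem_filter.mp hp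
    have hyp : (y:ℝ) ≤ p := by exact_mod_cast (Finset.mem_Ico.mp hmem).1
    have hppos : (0:ℝ) < p := by exact_mod_cast hprime.pos
    have hlogp : 0 ≤ Real.log p := Real.log_natCast_nonneg p
    split
    · have h1 : (y:ℝ) * (Real.log p / p) ≤ (p:ℝ) * (Real.log p / p) := by
        apply mul_le_mul_of_nonneg_right hyp (by positivity)
      have h2 : (p:ℝ) * (Real.log p / p) = Real.log p := by field_simp
      linarith
    · simp
  -- nonneg of range-y part of W
  have hWy_nonneg : 0 ≤ ∑ p ∈ (Finset.range y).filter Nat.Prime, (if p % k = l then Real.log p else 0) := by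
    apply Finset.sum_nonneg
    intro p hp
    have := Real.log_natCast_nonneg p
    split <;> simp [this]
  -- chain
  have hMIco : c * J / 4 ≤ ∑ p ∈ (Finset.Ico y Y).filter Nat.Prime, (if p % k = l then Real.log p / p else 0) := by
    have h1 : ∑ p ∈ (Finset.Ico y Y).filter Nat.Prime, (if p % k = l then Real.log p / p else 0)
        = Mf k l Y - Mf k l y := by
      rw [Mf, Mf, hMsplit]; ring
    rw [h1]
    have hJbig : 4*(C₂+L)/c ≤ (J:ℝ) := by
      have h2 : (⌈4*(C₂+L)/c⌉₊ : ℝ) ≤ (J:ℝ) := by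
        exact_mod_cast (by omega : ⌈4*(C₂+L)/c⌉₊ ≤ J)
      exact (Nat.le_ceil _).trans h2
    have h3 : C₂ + L ≤ c * J / 4 := by
      rw [div_le_iff₀ (by positivity)] at hJbig
      nlinarith [hc]
    linarith
  have hfinal : S * (8*((J:ℝ)+1)^2 + 1) ≤ (y:ℝ) * (c * J / 4) := by
    have hJbig2 : 33792 * S / c^3 ≤ (J:ℝ) := by
      have h2 : (⌈33792 * S / c^3⌉₊ : ℝ) ≤ (J:ℝ) := by
        exact_mod_cast (by omega : ⌈33792 * S / c^3⌉₊ ≤ J)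
      exact (Nat.le_ceil _).trans h2
    have h3 : 33792 * S ≤ c^3 * J := by
      rw [div_le_iff₀ (by positivity)] at hJbig2
      nlinarith
    have h4 : 8*((J:ℝ)+1)^2 + 1 ≤ 33*J^2 := by nlinarith
    have h5 : S * (8*((J:ℝ)+1)^2+1) ≤ 33 * S * J^2 := by nlinarith [hS1]
    have h6 : (c^2 * J^2/256) * (c*J/4) ≤ (y:ℝ) * (c*J/4) := by
      apply mul_le_mul_of_nonneg_right hybig (by positivity)
    have h7 : 33 * S * J^2 ≤ (c^2*J^2/256)*(c*J/4) := by
      have : 33 * S ≤ c^3 * J/1024 := by nlinarith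
      nlinarith [sq_nonneg (J:ℝ), hJR1]
    linarith
  -- conclude
  have hW : (y:ℝ) * (c*J/4) ≤ Wf k l Y := by
    calc (y:ℝ) * (c*J/4) ≤ (y:ℝ) * (∑ p ∈ (Finset.Ico y Y).filter Nat.Prime, (if p % k = l then Real.log p / p else 0)) := by
          apply mul_le_mul_of_nonneg_left hMIco (by positivity)
      _ ≤ ∑ p ∈ (Finset.Ico y Y).filter Nat.Prime, (if p % k = l then Real.log p else 0) := hIco
      _ ≤ Wf k l Y := by rw [Wf, hWsplit]; linarith
  have hlogY1 : 0 ≤ Real.log Y + 1 := by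
    have := Real.log_natCast_nonneg Y; linarith
  calc R * (Real.log Y + 1) ≤ S * (Real.log Y + 1) := by
        apply mul_le_mul_of_nonneg_right hSR hlogY1
    _ ≤ S * (8*((J:ℝ)+1)^2 + 1) := by
        apply mul_le_mul_of_nonneg_left (by linarith) (by linarith)
    _ ≤ (y:ℝ) * (c*J/4) := hfinal
    _ ≤ Wf k l Y := hW

end St16

/-- The least prime `≡ l (mod k)` not dividing `m`. -/
noncomputable def leastPrimeModCoprime (k l m : ℕ) : ℕ :=
  sInf {p : ℕ | p.Prime ∧ p % k = l ∧ ¬ p ∣ m}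

theorem stmt_16 (k l : ℕ) (hl : 1 ≤ l) (hlk : l < k) (hcop : Nat.gcd k l = 1)
    (r : ℕ) (hr : 1 ≤ r) :
    ∃ C : ℕ, 0 < C ∧ ∀ m : ℕ, C ≤ m → (leastPrimeModCoprime k l m) ^ r < m := by
  haveI : NeZero k := ⟨by omega⟩
  have ha : IsUnit ((l : ZMod k)) := by
    rw [ZMod.isUnit_iff_coprime]
    exact Nat.coprime_comm.mp hcop
  have hmodchar : ∀ p : ℕ, ((p : ZMod k) = (l : ZMod k)) ↔ p % k = l := by
    intro p
    rw [ZMod.natCast_eq_natCast_iff', Nat.mod_eq_of_lt hlk]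
  obtain ⟨Y₀, hY₀2, hkey⟩ := St16.key k l hl hlk hcop (r : ℝ)
  refine ⟨(Y₀+2)^r + Y₀ + 2, by positivity, ?_⟩
  intro m hm
  have hm1 : 1 ≤ m := by
    have : 1 ≤ (Y₀+2)^r := Nat.one_le_pow _ _ (by omega)
    omega
  set s : Set ℕ := {p : ℕ | p.Prime ∧ p % k = l ∧ ¬ p ∣ m} with hs_def
  have hsne : s.Nonempty := by
    obtain ⟨p, hpgt, hpp, hpa⟩ := Nat.forall_exists_prime_gt_and_eq_mod ha m
    refine ⟨p, hpp, (hmodchar p).mp hpa, fun hdvd => ?_⟩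
    have := Nat.le_of_dvd (by omega) hdvd
    omega
  set P : ℕ := leastPrimeModCoprime k l m with hP_def
  have hPmem : P ∈ s := Nat.sInf_mem hsne
  obtain ⟨hPprime, hPmod, hPdvd⟩ := hPmem
  have hdvd_all : ∀ q : ℕ, q < P → q.Prime → q % k = l → q ∣ m := by
    intro q hq hqp hqm
    by_contra hnd
    have hq' : q < sInf s := hq
    exact Nat.notMem_of_lt_sInf hq' ⟨hqp, hqm, hnd⟩
  -- the product of small primes in the progression divides m
  set D : Finset ℕ := (Finset.range P).filter (fun q => q.Prime ∧ q % k = l) with hD_def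
  have hprod_dvd : (∏ q ∈ D, q) ∣ m := by
    apply Finset.prod_primes_dvd
    · intro q hq
      exact (Finset.mem_filter.mp hq).2.1.prime
    · intro q hq
      obtain ⟨hqr, hqp, hqm⟩ := Finset.mem_filter.mp hq
      exact hdvd_all q (Finset.mem_range.mp hqr) hqp hqm
  have hprod_le : (∏ q ∈ D, q) ≤ m := Nat.le_of_dvd (by omega) hprod_dvd
  have hprod_pos : 0 < ∏ q ∈ D, q :=
    Finset.prod_pos (fun q hq => (Finset.mem_filter.mp hq).2.1.pos)
  -- log m ≥ Wf k l P
  have hWlog : St16.Wf k l P ≤ Real.log m := by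
    have h1 : Real.log (((∏ q ∈ D, q : ℕ) : ℝ)) = St16.Wf k l P := by
      rw [Nat.cast_prod, Real.log_prod (fun q hq => by
        have := (Finset.mem_filter.mp hq).2.1.pos
        positivity)]
      rw [show D = ((Finset.range P).filter Nat.Prime).filter (fun q => q % k = l) from by
        rw [hD_def, Finset.filter_filter], Finset.sum_filter, St16.Wf]
    rw [← h1]
    apply Real.log_le_log (by exact_mod_cast hprod_pos : (0:ℝ) < ((∏ q ∈ D, q : ℕ) : ℝ))
    exact_mod_cast hprod_le
  by_cases hPY : Y₀ ≤ P
  · -- large case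
    have hk1 := hkey P hPY
    have hP2 : 2 ≤ P := hPprime.two_le
    have hlogP : 0 ≤ Real.log P := Real.log_natCast_nonneg P
    have hr1 : (1:ℝ) ≤ (r:ℝ) := by exact_mod_cast hr
    have hlt : Real.log ((P:ℝ)^r) < Real.log m := by
      rw [Real.log_pow]
      have : (r:ℝ) * (Real.log P + 1) ≤ Real.log m := le_trans hk1 hWlog
      nlinarith
    have hlt2 : ((P:ℝ))^r < (m:ℝ) := by
      rwa [Real.log_lt_log_iff (by positivity) (by exact_mod_cast hm1 : (0:ℝ) < (m:ℝ))] at hlt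
    exact_mod_cast hlt2
  · -- small case
    push_neg at hPY
    calc P^r ≤ Y₀^r := Nat.pow_le_pow_left (by omega) r
      _ < (Y₀+2)^r := Nat.pow_lt_pow_left (by omega) (by omega)
      _ < (Y₀+2)^r + Y₀ + 2 := by omega
      _ ≤ m := hm
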